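/- Local vs global validity: the formula [a ⊔ b]φ ↔ [U]φ is valid in every structure over the vocabulary with primitive actions exactly {a, b}, but there exists a structure over the vocabulary with primitive actions {a, b, c} and a world falsifying it. -/

import Mathlib

/-- Boolean action terms over a set `A` of primitive actions. -/
inductive ActTerm (A : Type) : Type
  | prim  : A → ActTerm A
  | meet  : ActTerm A → ActTerm A → ActTerm A
  | join  : ActTerm A → ActTerm A → ActTerm A
  | compl : ActTerm A → ActTerm A
  | empty : ActTerm A
  | univ  : ActTerm A

/-- Formulae of the deontic action logic DPL over primitive actions `A`
    and propositional variables `P`. -/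
inductive Form (A P : Type) : Type
  | prop  : P → Form A P
  | neg   : Form A P → Form A P
  | imp   : Form A P → Form A P → Form A P
  | box   : ActTerm A → Form A P → Form A P
  | sperm : ActTerm A → Form A P            -- strong permission P(α)
  | wperm : ActTerm A → Form A P            -- weak permission Pw(α)
  | eq    : ActTerm A → ActTerm A → Form A P

/-- Diamond `⟨α⟩φ := ¬[α]¬φ`. -/
def Form.dia {A P : Type} (α : ActTerm A) (φ : Form A P) : Form A P :=
  .neg (.box α (.neg φ))

/-- Conjunction. -/
def Form.and {A P : Type} (φ ψ : Form A P) : Form A P := .neg (.imp φ (.neg ψ))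

/-- Disjunction. -/
def Form.or {A P : Type} (φ ψ : Form A P) : Form A P := .imp (.neg φ) ψ

/-- Biconditional. -/
def Form.iff {A P : Type} (φ ψ : Form A P) : Form A P := (φ.imp ψ).and (ψ.imp φ)

/-- DPL structures over the vocabulary `⟨A, P⟩` (def. 1 of the paper):
worlds, events, a deterministic event-labeled transition relation,
a permission relation and an interpretation satisfying I.1, I.2, I.3. -/
structure DPLStruct (A P : Type) where
  W : Type
  E : Type
  nonemptyE : Nonempty E
  R : W → W → E → Prop
  det : ∀ w w' w'' e, R w w' e → R w w'' e → w' = w''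
  Perm : W → E → Prop
  Iprop : P → Set W
  Iact : A → Set E
  I1 : ∀ a : A, (Iact a \ ⋃ (b : A) (_ : b ≠ a), Iact b).Subsingleton
  I2 : ∀ (e : E) (a b : A), a ≠ b → e ∈ Iact a → e ∈ Iact b →
        (⋂ (c : A) (_ : e ∈ Iact c), Iact c) = {e}
  I3 : (⋃ a : A, Iact a) = Set.univ

/-- Interpretation of action terms as sets of events. -/
def ActTerm.interp {A P : Type} (M : DPLStruct A P) : ActTerm A → Set M.E
  | .prim a => M.Iact a
  | .meet α β => α.interp M ∩ β.interp M
  | .join α β => α.interp M ∪ β.interp M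
  | .compl α => (α.interp M)ᶜ
  | .empty => ∅
  | .univ => Set.univ

/-- Satisfaction of DPL formulae at a world of a structure. -/
def Sat {A P : Type} (M : DPLStruct A P) : M.W → Form A P → Prop
  | w, .prop p => w ∈ M.Iprop p
  | w, .neg φ => ¬ Sat M w φ
  | w, .imp φ ψ => Sat M w φ → Sat M w ψ
  | w, .box α φ => ∀ e ∈ α.interp M, ∀ w', M.R w w' e → Sat M w' φ
  | w, .sperm α => ∀ e ∈ α.interp M, M.Perm w e
  | w, .wperm α => ∃ e ∈ α.interp M, M.Perm w e
  | w, .eq α β => α.interp M = β.interp M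


lemma union_fin2 {P : Type} (M : DPLStruct (Fin 2) P) :
    M.Iact 0 ∪ M.Iact 1 = Set.univ := by
  have h := M.I3
  rw [← h]
  ext e
  simp only [Set.mem_iUnion, Set.mem_union]
  constructor
  · rintro (h | h)
    · exact ⟨0, h⟩
    · exact ⟨1, h⟩
  · rintro ⟨a, ha⟩
    fin_cases a
    · exact Or.inl ha
    · exact Or.inr ha

def cex : DPLStruct (Fin 3) Unit where
  W := Fin 2
  E := Fin 3
  nonemptyE := ⟨0⟩
  R w w' e := w = 0 ∧ w' = 1 ∧ e = 2
  det := by rintro w w' w'' e ⟨_, h1, _⟩ ⟨_, h2, _⟩; rw [h1, h2]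
  Perm _ _ := False
  Iprop _ := {0}
  Iact a := {a}
  I1 := by intro a; exact (Set.subsingleton_singleton).anti Set.diff_subset
  I2 := by
    intro e a b hab ha hb
    simp only [Set.mem_singleton_iff] at ha hb
    exact absurd (ha.symm.trans hb) hab
  I3 := by
    ext e
    simp only [Set.mem_iUnion, Set.mem_singleton_iff, Set.mem_univ, iff_true]
    exact ⟨e, rfl⟩

/-- Local vs. global validity: `[a ⊔ b]φ ↔ [U]φ` is valid in every structure
over the vocabulary with primitive actions exactly `{a, b}`, but over the
vocabulary `{a, b, c}` there is a structure and a world falsifying (an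
instance of) it. -/
theorem local_vs_global_validity :
    (∀ (P : Type) (φ : Form (Fin 2) P) (M : DPLStruct (Fin 2) P) (w : M.W),
      Sat M w (Form.iff (Form.box (.join (.prim 0) (.prim 1)) φ)
                        (Form.box .univ φ))) ∧
    (∃ (P : Type) (φ : Form (Fin 3) P) (M : DPLStruct (Fin 3) P) (w : M.W),
      ¬ Sat M w (Form.iff (Form.box (.join (.prim 0) (.prim 1)) φ)
                          (Form.box .univ φ))) := by
  constructor
  · intro P φ M w
    have hU : ActTerm.interp M (ActTerm.join (.prim 0) (.prim 1))
        = ActTerm.interp M ActTerm.univ := by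
      simp [ActTerm.interp, union_fin2 M]
    simp only [Sat, Form.iff, Form.and, hU]
    tauto
  · refine ⟨Unit, .prop (), cex, (show cex.W from ((0:Fin 2))), ?_⟩
    simp only [Sat, Form.iff, Form.and]
    intro h
    have h1 : Sat cex (show cex.W from ((0:Fin 2))) (Form.box (ActTerm.join (.prim 0) (.prim 1)) (.prop ())) := by
      intro e he w' hw'
      exfalso
      simp only [ActTerm.interp, cex, Set.mem_union, Set.mem_singleton_iff] at he
      rcases hw' with ⟨_, _, he2⟩
      rcases he with h | h <;> rw [he2] at h <;> exact absurd h (by show ¬ ((2 : Fin 3) = _); decide)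
    have h2 := (_root_.not_imp.mp h).1 h1
    have := h2 (show cex.E from ((2:Fin 3))) (by simp [ActTerm.interp]; exact Set.mem_univ _) (show cex.W from ((1:Fin 2))) ⟨rfl, rfl, rfl⟩
    simp [Sat, cex] at this
    exact absurd this (by show ¬ ((1 : Fin 2) = 0); decide)
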